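/- Let G be a finite group, H ≤ G a subgroup, and a a commuting n-tuple in G. Then the double coset-style identity holds in the free abelian group on H-conjugacy classes of commuting n-tuples in H: the sum over H-conjugacy classes [b] of n-tuples b in H that are G-conjugate to a, weighted by the index |C_G(a) : C_G(a) ∩ gHg⁻¹| (for any g with g⁻¹ag = b), equals the sum over cosets gH ∈ G/H with g⁻¹ag ∈ H of the class [g⁻¹ag]. Equivalently: ∑_{[b]: ∃g, g⁻¹ag=b} |C_G(a)/(C_G(a) ∩ gHg⁻¹)| · [b] = ∑_{gH ∈ G/H, g⁻¹ag ∈ H} [g⁻¹ag]. -/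

import Mathlib

/-- Commuting `n`-tuples with entries in the subgroup `H`. -/
def CommTupleIn {G : Type*} [Group G] (H : Subgroup G) (n : ℕ) :=
  {b : Fin n → G // (∀ i, b i ∈ H) ∧ ∀ i j, Commute (b i) (b j)}

/-- `H`-conjugacy of commuting tuples with entries in `H`. -/
def hConjRel {G : Type*} [Group G] (H : Subgroup G) (n : ℕ) :
    CommTupleIn H n → CommTupleIn H n → Prop :=
  fun b b' => ∃ h ∈ H, ∀ i, b'.val i = h⁻¹ * b.val i * h

/-- `H`-conjugacy classes of commuting `n`-tuples in `H`. -/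
def HClass {G : Type*} [Group G] (H : Subgroup G) (n : ℕ) := Quot (hConjRel H n)

/-- The `H`-conjugacy class of the tuple `g⁻¹ a g`, for `g` conjugating the commuting
tuple `a` into `H`. -/
def classOf {G : Type*} [Group G] (H : Subgroup G) {n : ℕ} (a : Fin n → G)
    (hcomm : ∀ i j, Commute (a i) (a j)) (g : G)
    (hmem : ∀ i, g⁻¹ * a i * g ∈ H) : HClass H n :=
  Quot.mk _ ⟨fun i => g⁻¹ * a i * g, hmem, fun i j => by
    show (g⁻¹ * a i * g) * (g⁻¹ * a j * g) = (g⁻¹ * a j * g) * (g⁻¹ * a i * g)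
    calc (g⁻¹ * a i * g) * (g⁻¹ * a j * g) = g⁻¹ * (a i * a j) * g := by group
      _ = g⁻¹ * (a j * a i) * g := by rw [(hcomm i j).eq]
      _ = (g⁻¹ * a j * g) * (g⁻¹ * a i * g) := by group⟩

lemma hConjRel_equiv {G : Type*} [Group G] (H : Subgroup G) (n : ℕ) :
    Equivalence (hConjRel H n) := by
  constructor
  · intro b; exact ⟨1, H.one_mem, fun i => by simp⟩
  · rintro b b' ⟨h, hh, e⟩
    exact ⟨h⁻¹, H.inv_mem hh, fun i => by rw [e i]; group⟩
  · rintro b b' b'' ⟨h, hh, e⟩ ⟨k, hk, e'⟩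
    exact ⟨h * k, H.mul_mem hh hk, fun i => by rw [e' i, e i]; group⟩

lemma classOf_eq_iff {G : Type*} [Group G] (H : Subgroup G) {n : ℕ} (a : Fin n → G)
    (hcomm : ∀ i j, Commute (a i) (a j)) (g g' : G)
    (hg : ∀ i, g⁻¹ * a i * g ∈ H) (hg' : ∀ i, g'⁻¹ * a i * g' ∈ H) :
    classOf H a hcomm g hg = classOf H a hcomm g' hg' ↔
      ∃ h ∈ H, ∀ i, g'⁻¹ * a i * g' = h⁻¹ * (g⁻¹ * a i * g) * h := by
  unfold classOf
  refine (Quot.eq (r := hConjRel H n)).trans ?_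
  constructor
  · intro hrel
    obtain ⟨h, hh, e⟩ := (Equivalence.eqvGen_iff (hConjRel_equiv H n)).mp hrel
    exact ⟨h, hh, e⟩
  · rintro ⟨h, hh, e⟩
    exact (Equivalence.eqvGen_iff (hConjRel_equiv H n)).mpr ⟨h, hh, e⟩

lemma smul_mk_eq {G : Type*} [Group G] (H C : Subgroup G) (c : C) (x : G) :
    c • (QuotientGroup.mk x : G ⧸ H) = QuotientGroup.mk ((c : G) * x) := rfl

lemma stab_eq {G : Type*} [Group G] (H C : Subgroup G) (g₀ : G) :
    MulAction.stabilizer C (QuotientGroup.mk g₀ : G ⧸ H) =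
      (Subgroup.map (MulAut.conj g₀).toMonoidHom H).subgroupOf C := by
  ext ⟨c, hc⟩
  rw [MulAction.mem_stabilizer_iff, smul_mk_eq, QuotientGroup.eq, Subgroup.mem_subgroupOf]
  simp only [Subgroup.mem_map, MonoidHom.coe_coe, MulEquiv.coe_toMonoidHom,
    MulAut.conj_apply]
  constructor
  · intro h
    refine ⟨((c * g₀)⁻¹ * g₀)⁻¹, H.inv_mem h, by group⟩
  · rintro ⟨h, hh, rfl⟩
    have : (g₀ * h * g₀⁻¹ * g₀)⁻¹ * g₀ = h⁻¹ := by group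
    rw [this]
    exact H.inv_mem hh

lemma count_coset {G : Type*} [Group G] [Fintype G] (H C : Subgroup G) (g₀ : G) :
    Nat.card {g : G // ∃ c ∈ C, ∃ h ∈ H, g = c * g₀ * h} =
      Nat.card H *
        Subgroup.relIndex (Subgroup.map (MulAut.conj g₀).toMonoidHom H) C := by
  have hset : {g : G | ∃ c ∈ C, ∃ h ∈ H, g = c * g₀ * h} =
      QuotientGroup.mk ⁻¹' (MulAction.orbit C (QuotientGroup.mk g₀ : G ⧸ H)) := by
    ext g
    simp only [Set.mem_setOf_eq, Set.mem_preimage, MulAction.mem_orbit_iff]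
    constructor
    · rintro ⟨c, hc, h, hh, rfl⟩
      refine ⟨⟨c, hc⟩, ?_⟩
      rw [smul_mk_eq, QuotientGroup.eq]
      have : (c * g₀)⁻¹ * (c * g₀ * h) = h := by group
      rw [this]; exact hh
    · rintro ⟨⟨c, hc⟩, he⟩
      rw [smul_mk_eq, QuotientGroup.eq] at he
      exact ⟨c, hc, (c * g₀)⁻¹ * g, he, by group⟩
  have h1 : Nat.card {g : G // ∃ c ∈ C, ∃ h ∈ H, g = c * g₀ * h} =
      Nat.card (QuotientGroup.mk ⁻¹' (MulAction.orbit C (QuotientGroup.mk g₀ : G ⧸ H))) :=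
    Nat.card_congr (Equiv.setCongr hset)
  rw [h1, Nat.card_congr (QuotientGroup.preimageMkEquivSubgroupProdSet H _), Nat.card_prod,
    Nat.card_congr (MulAction.orbitEquivQuotientStabilizer C
      (QuotientGroup.mk g₀ : G ⧸ H)), stab_eq]
  rfl

open scoped Classical in
theorem transfer_class_function_formula {G : Type*} [Group G] [Fintype G]
    (H : Subgroup G) {n : ℕ}
    (a : Fin n → G) (hcomm : ∀ i j, Commute (a i) (a j))
    [Fintype (HClass H n)]
    (sel : HClass H n → G)
    (hsel : ∀ q : HClass H n,
      (∃ (g : G) (hg : ∀ i, g⁻¹ * a i * g ∈ H), classOf H a hcomm g hg = q) →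
      ∃ hg : ∀ i, (sel q)⁻¹ * a i * (sel q) ∈ H, classOf H a hcomm (sel q) hg = q) :
    Nat.card H •
      (∑ q : HClass H n,
        if (∃ (g : G) (hg : ∀ i, g⁻¹ * a i * g ∈ H), classOf H a hcomm g hg = q) then
          Finsupp.single q
            ((Subgroup.relIndex (Subgroup.map (MulAut.conj (sel q)).toMonoidHom H)
                (Subgroup.centralizer (Set.range a)) : ℤ))
        else (0 : HClass H n →₀ ℤ))
    = ∑ g : G,
        if hg : ∀ i, g⁻¹ * a i * g ∈ H then
          Finsupp.single (classOf H a hcomm g hg) (1 : ℤ)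
        else 0 := by
  classical
  set C := Subgroup.centralizer (Set.range a) with hC
  ext q₀
  rw [Finsupp.smul_apply, Finsupp.finset_sum_apply, Finsupp.finset_sum_apply]
  simp only [apply_ite (fun f : HClass H n →₀ ℤ => f q₀),
    apply_dite (fun f : HClass H n →₀ ℤ => f q₀),
    Finsupp.single_apply, Finsupp.coe_zero, Pi.zero_apply]
  -- LHS simplification
  have hL : (∑ q : HClass H n,
      if (∃ (g : G) (hg : ∀ i, g⁻¹ * a i * g ∈ H), classOf H a hcomm g hg = q) then
        (if q = q₀ then
          ((Subgroup.relIndex (Subgroup.map (MulAut.conj (sel q)).toMonoidHom H) C : ℤ))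
        else 0)
      else 0)
      = if (∃ (g : G) (hg : ∀ i, g⁻¹ * a i * g ∈ H), classOf H a hcomm g hg = q₀) then
          ((Subgroup.relIndex (Subgroup.map (MulAut.conj (sel q₀)).toMonoidHom H) C : ℤ))
        else 0 := by
    rw [Finset.sum_eq_single q₀]
    · simp
    · intro q _ hq
      split_ifs with h1 h2 <;> first | rfl | exact absurd h2 hq
    · intro h; exact absurd (Finset.mem_univ q₀) h
  rw [hL]
  -- RHS simplification
  have hR : (∑ g : G,
      if hg : ∀ i, g⁻¹ * a i * g ∈ H then
        (if classOf H a hcomm g hg = q₀ then (1 : ℤ) else 0)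
      else 0)
      = ((Finset.univ.filter (fun g : G =>
          ∃ hg : ∀ i, g⁻¹ * a i * g ∈ H, classOf H a hcomm g hg = q₀)).card : ℤ) := by
    rw [← Finset.sum_boole]
    refine Finset.sum_congr rfl fun g _ => ?_
    by_cases hcg : ∀ i, g⁻¹ * a i * g ∈ H
    · rw [dif_pos hcg]
      by_cases hcl : classOf H a hcomm g hcg = q₀
      · rw [if_pos hcl, if_pos ⟨hcg, hcl⟩]
      · rw [if_neg hcl, if_neg]
        rintro ⟨hg', hcl'⟩
        exact hcl hcl'
    · rw [dif_neg hcg, if_neg]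
      rintro ⟨hg', _⟩
      exact hcg hg'
  rw [hR]
  by_cases hre : ∃ (g : G) (hg : ∀ i, g⁻¹ * a i * g ∈ H), classOf H a hcomm g hg = q₀
  · rw [if_pos hre]
    obtain ⟨hg₀, hcl₀⟩ := hsel q₀ hre
    set g₀ := sel q₀ with hg₀def
    have hPiff : ∀ g : G,
        (∃ hg : ∀ i, g⁻¹ * a i * g ∈ H, classOf H a hcomm g hg = q₀) ↔
          ∃ c ∈ C, ∃ h ∈ H, g = c * g₀ * h := by
      intro g
      constructor
      · rintro ⟨hg, hcl⟩
        rw [← hcl₀] at hcl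
        obtain ⟨h, hh, e⟩ := (classOf_eq_iff H a hcomm g g₀ hg hg₀).mp hcl
        have hc : g * h * g₀⁻¹ ∈ C := by
          rw [hC, Subgroup.mem_centralizer_iff]
          rintro x ⟨i, rfl⟩
          have e1 : g₀⁻¹ * a i * g₀ = h⁻¹ * (g⁻¹ * a i * g) * h := e i
          calc a i * (g * h * g₀⁻¹)
              = g * h * (h⁻¹ * (g⁻¹ * a i * g) * h) * g₀⁻¹ := by group
            _ = g * h * (g₀⁻¹ * a i * g₀) * g₀⁻¹ := by rw [e1]
            _ = (g * h * g₀⁻¹) * a i := by group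
        exact ⟨g * h * g₀⁻¹, hc, h⁻¹, H.inv_mem hh, by group⟩
      · rintro ⟨c, hc, h, hh, rfl⟩
        have hcom : ∀ i, c⁻¹ * a i * c = a i := by
          intro i
          have h2 := (Subgroup.mem_centralizer_iff.mp hc) (a i) ⟨i, rfl⟩
          calc c⁻¹ * a i * c = c⁻¹ * (a i * c) := by group
            _ = c⁻¹ * (c * a i) := by rw [h2]
            _ = a i := by group
        have hkey : ∀ i, (c * g₀ * h)⁻¹ * a i * (c * g₀ * h)
            = h⁻¹ * (g₀⁻¹ * a i * g₀) * h := by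
          intro i
          calc (c * g₀ * h)⁻¹ * a i * (c * g₀ * h)
              = h⁻¹ * g₀⁻¹ * (c⁻¹ * a i * c) * g₀ * h := by group
            _ = h⁻¹ * g₀⁻¹ * a i * g₀ * h := by rw [hcom i]
            _ = h⁻¹ * (g₀⁻¹ * a i * g₀) * h := by group
        have hg : ∀ i, (c * g₀ * h)⁻¹ * a i * (c * g₀ * h) ∈ H := by
          intro i
          rw [hkey i]
          exact H.mul_mem (H.mul_mem (H.inv_mem hh) (hg₀ i)) hh
        refine ⟨hg, ?_⟩
        rw [← hcl₀]
        rw [classOf_eq_iff H a hcomm (c * g₀ * h) g₀ hg hg₀]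
        refine ⟨h⁻¹, H.inv_mem hh, fun i => ?_⟩
        rw [hkey i]
        group
    have hcard : (Finset.univ.filter (fun g : G =>
        ∃ hg : ∀ i, g⁻¹ * a i * g ∈ H, classOf H a hcomm g hg = q₀)).card
        = Nat.card H *
          Subgroup.relIndex (Subgroup.map (MulAut.conj g₀).toMonoidHom H) C := by
      rw [← count_coset H C g₀]
      rw [Nat.card_eq_fintype_card, Fintype.card_subtype]
      congr 1
      apply Finset.filter_congr
      intro g _
      simpa using hPiff g
    rw [hcard]
    push_cast
    rw [nsmul_eq_mul]
  · rw [if_neg hre, smul_zero]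
    have : (Finset.univ.filter (fun g : G =>
        ∃ hg : ∀ i, g⁻¹ * a i * g ∈ H, classOf H a hcomm g hg = q₀)) = ∅ := by
      rw [Finset.filter_eq_empty_iff]
      rintro g _ ⟨hg, hcl⟩
      exact hre ⟨g, hg, hcl⟩
    rw [this]
    simp
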